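/- If a vertex v of degree exactly 2 is removed from a Laman graph G on n ≥ 3 vertices, the resulting graph on n - 1 vertices is again a Laman graph (no edges need to be added). -/

import Mathlib

open scoped Classical

/-- Laman (minimally rigid in the plane) graph on a finite vertex set. -/
def IsLaman {V : Type*} [Fintype V] (G : SimpleGraph V) : Prop :=
  G.edgeFinset.card = 2 * Fintype.card V - 3 ∧
  ∀ s : Finset V, 2 ≤ s.card →
    (G.edgeFinset.filter (fun e => ∀ v ∈ e, v ∈ s)).card ≤ 2 * s.card - 3

/-- Removing a vertex of degree exactly 2 from a Laman graph on at least 3 vertices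
(the inverse Henneberg-1 operation) yields a Laman graph. -/
theorem stmt16 {V : Type*} [Fintype V] (G : SimpleGraph V)
    (hG : IsLaman G) (hn : 3 ≤ Fintype.card V)
    (v : V) (hdeg : G.degree v = 2) :
    IsLaman (G.induce {u : V | u ≠ v}) := by
  classical
  obtain ⟨hcard, hsub⟩ := hG
  set S : Set V := {u : V | u ≠ v} with hS
  have hmapinj : Function.Injective (Sym2.map (Subtype.val : S → V)) :=
    Sym2.map.injective Subtype.val_injective
  have hmem : ∀ e : Sym2 S, e ∈ (G.induce S).edgeFinset ↔
      Sym2.map Subtype.val e ∈ G.edgeFinset := by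
    intro e
    induction e using Sym2.ind with
    | _ a b => simp [Sym2.map_pair_eq]
  have hcardS : Fintype.card S = Fintype.card V - 1 := by
    have : Fintype.card {u : V // ¬ u = v} = Fintype.card V - Fintype.card {u : V // u = v} :=
      Fintype.card_subtype_compl _
    rw [Fintype.card_subtype_eq] at this
    rw [← this]
    exact Fintype.card_congr' rfl
  constructor
  · have h1 : ((G.induce S).edgeFinset).card =
        (G.edgeFinset.filter (fun e => ∀ u ∈ e, u ≠ v)).card := by
      apply Finset.card_bij (fun e _ => Sym2.map Subtype.val e)
      · intro e he
        rw [Finset.mem_filter]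
        refine ⟨(hmem e).1 he, ?_⟩
        intro u hu
        obtain ⟨a, _, rfl⟩ := Sym2.mem_map.1 hu
        exact a.2
      · intro a _ b _ h
        exact hmapinj h
      · intro e he
        rw [Finset.mem_filter] at he
        induction e using Sym2.ind with
        | _ a b =>
          refine ⟨s(⟨a, he.2 a (by simp)⟩, ⟨b, he.2 b (by simp)⟩), ?_, ?_⟩
          · rw [hmem]
            simpa [Sym2.map_pair_eq] using he.1
          · simp [Sym2.map_pair_eq]
    have h2 : (G.edgeFinset.filter (fun e => v ∈ e)).card +
        (G.edgeFinset.filter (fun e => ∀ u ∈ e, u ≠ v)).card = G.edgeFinset.card := by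
      have heq : G.edgeFinset.filter (fun e => ∀ u ∈ e, u ≠ v) =
          G.edgeFinset.filter (fun e => ¬ v ∈ e) := by
        apply Finset.filter_congr
        intro e _
        constructor
        · intro h hv
          exact h v hv rfl
        · intro h u hu huv
          exact h (huv ▸ hu)
      rw [heq]
      exact Finset.card_filter_add_card_filter_not _
    have h3 : (G.edgeFinset.filter (fun e => v ∈ e)).card = 2 := by
      rw [← SimpleGraph.incidenceFinset_eq_filter, SimpleGraph.card_incidenceFinset_eq_degree,
        hdeg]
    show (G.induce S).edgeFinset.card = 2 * Fintype.card S - 3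
    rw [h1, hcardS]
    omega
  · intro s hs
    have hts : (s.image (Subtype.val : S → V)).card = s.card :=
      Finset.card_image_of_injective _ Subtype.val_injective
    have h4 := hsub (s.image Subtype.val) (le_of_le_of_eq hs hts.symm)
    have h5 : 2 * (s.image (Subtype.val : S → V)).card - 3 = 2 * s.card - 3 := by rw [hts]
    refine le_trans ?_ (le_trans h4 (le_of_eq h5))
    apply Finset.card_le_card_of_injOn (Sym2.map Subtype.val)
    · intro e he
      simp only [Finset.coe_filter, Set.mem_setOf_eq, Finset.mem_filter] at he ⊢
      refine ⟨(hmem e).1 he.1, ?_⟩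
      intro u hu
      obtain ⟨a, ha, rfl⟩ := Sym2.mem_map.1 hu
      exact Finset.mem_image_of_mem _ (he.2 a ha)
    · exact fun a _ b _ h => hmapinj h
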